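/- Let S be an axis-aligned square with center q, let α be a real with 0 < α < 2π, and let i = max(3, ⌈log₂(2π/α)⌉ + 1). Then every closed angular sector with apex q and angle α contains at least one triangle of Slicing(i) of S. -/

import Mathlib

open Real

noncomputable section

/-- Points of the Euclidean plane. -/
abbrev Pt := EuclideanSpace ℝ (Fin 2)

/-- The unit vector in direction angle `a`. -/
def unitDir (a : ℝ) : Pt := WithLp.toLp 2 ![Real.cos a, Real.sin a]

/-- The closed angular sector with apex `p`, swept clockwise from the half-line in
direction angle `a` through angle `θ` (it consists of the points lying on the half-lines
from `p` in the direction angles `a - t` for `0 ≤ t ≤ θ`, including both bounding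
half-lines). -/
def sector (p : Pt) (a θ : ℝ) : Set Pt :=
  {q | ∃ r : ℝ, 0 ≤ r ∧ ∃ t : ℝ, 0 ≤ t ∧ t ≤ θ ∧ q = p + r • unitDir (a - t)}

/-- The axis-aligned square with center `q` and side length `x`. -/
def square (q : Pt) (x : ℝ) : Set Pt :=
  {y | y 0 ∈ Set.Icc (q 0 - x / 2) (q 0 + x / 2) ∧ y 1 ∈ Set.Icc (q 1 - x / 2) (q 1 + x / 2)}

/-- The tile in position `(a, b)` of `Tiling(m)` of the square with center `q` and side
length `x`: the `(a, b)`-th of the `4^m` closed congruent subsquares of side `x / 2^m`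
arranged in a `2^m × 2^m` grid. -/
def tile (q : Pt) (x : ℝ) (m : ℕ) (a b : ℕ) : Set Pt :=
  {y | y 0 ∈ Set.Icc (q 0 - x / 2 + a * (x / 2 ^ m)) (q 0 - x / 2 + (a + 1) * (x / 2 ^ m)) ∧
       y 1 ∈ Set.Icc (q 1 - x / 2 + b * (x / 2 ^ m)) (q 1 - x / 2 + (b + 1) * (x / 2 ^ m))}

/-- `t` is a tile of `Tiling(m)` of the square with center `q` and side length `x`. -/
def IsTile (q : Pt) (x : ℝ) (m : ℕ) (t : Set Pt) : Prop :=
  ∃ a b : ℕ, a < 2 ^ m ∧ b < 2 ^ m ∧ t = tile q x m a b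

/-- The `k`-th piece of `Slicing(i)` of the square with center `q` and side length `x`:
the part of the square lying in the angular sector bounded by the half-lines from `q` at
direction angles `2πk/2^i` and `2π(k+1)/2^i` (for `i ≥ 3` this piece is a triangle). -/
def slicePiece (q : Pt) (x : ℝ) (i k : ℕ) : Set Pt :=
  {y | ∃ r : ℝ, 0 ≤ r ∧ ∃ θ : ℝ, 2 * π * k / 2 ^ i ≤ θ ∧ θ ≤ 2 * π * (k + 1) / 2 ^ i ∧
    y = q + r • unitDir θ} ∩ square q x

/-- `T` is a triangle of `Slicing(i)` of the square with center `q` and side length `x`. -/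
def IsSliceTriangle (q : Pt) (x : ℝ) (i : ℕ) (T : Set Pt) : Prop :=
  ∃ k : ℕ, k < 2 ^ i ∧ T = slicePiece q x i k

/-- The vertex of `Slicing(i)` on the boundary of the square of side 2 centered at the
origin: the intersection of the `k`-th slicing half-line with the boundary of the square. -/
def sliceVertex (i k : ℕ) : Pt :=
  (max |Real.cos (2 * π * k / 2 ^ i)| |Real.sin (2 * π * k / 2 ^ i)|)⁻¹ •
    unitDir (2 * π * k / 2 ^ i)

/-- The set of side lengths of the triangles of `Slicing(i)` of the square of side 2
centered at the origin (the triangle `k` has vertices `0`, `sliceVertex i k` and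
`sliceVertex i (k+1)`); the ratios of side lengths are independent of the size of the
square. -/
def sideLengths (i : ℕ) : Set ℝ :=
  ⋃ k ∈ Set.Iio (2 ^ i), {‖sliceVertex i k‖, dist (sliceVertex i k) (sliceVertex i (k + 1))}

/-- `ρ i`: the maximum of `⌈a/b⌉` over all side lengths `a`, `b` of triangles of
`Slicing(i)` of a square. -/
def rho (i : ℕ) : ℕ :=
  sSup {n : ℕ | ∃ a ∈ sideLengths i, ∃ b ∈ sideLengths i, n = ⌈a / b⌉₊}

/-- `φ(i) = i · ρ i`. -/
def phi (i : ℕ) : ℕ := i * rho i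

/-- `index(α) = 4 · φ(max(3, ⌈log₂(2π/α)⌉ + 1))`. -/
def index (α : ℝ) : ℕ := 4 * phi (max 3 (⌈Real.logb 2 (2 * π / α)⌉ + 1)).toNat

/-- Every closed angular sector of angle `α ∈ (0, 2π)` with apex at the center `q` of an
axis-aligned square `S` contains a triangle of `Slicing(max(3, ⌈log₂(2π/α)⌉ + 1))` of `S`. -/
theorem sector_contains_slice_triangle (q : Pt) (x : ℝ) (hx : 0 < x)
    (α : ℝ) (hα : 0 < α) (hα2 : α < 2 * π) (a : ℝ) :
    ∃ T : Set Pt, IsSliceTriangle q x (max 3 (⌈Real.logb 2 (2 * π / α)⌉ + 1)).toNat T ∧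
      T ⊆ sector q a α := by
  have hπ : (0:ℝ) < π := Real.pi_pos
  set c : ℤ := ⌈Real.logb 2 (2 * π / α)⌉ with hc
  set i : ℕ := (max 3 (c + 1)).toNat with hidef
  have hfrac : (1:ℝ) < 2 * π / α := (one_lt_div hα).2 hα2
  have hfracpos : (0:ℝ) < 2 * π / α := by linarith
  have hlogpos : 0 < Real.logb 2 (2 * π / α) :=
    Real.logb_pos one_lt_two hfrac
  have hc1 : 1 ≤ c := by
    have := Int.le_ceil (Real.logb 2 (2 * π / α))
    exact_mod_cast Int.ceil_pos.2 hlogpos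
  have hile : c.toNat + 1 ≤ i := by
    have h1 : c + 1 ≤ max 3 (c + 1) := le_max_right _ _
    have h2 : (c + 1).toNat ≤ i := by
      rw [hidef]; exact Int.toNat_le_toNat h1
    omega
  -- 2 ^ c.toNat ≥ 2π/α
  have hpow : 2 * π / α ≤ (2:ℝ) ^ c.toNat := by
    have hcn : Real.logb 2 (2 * π / α) ≤ (c.toNat : ℝ) := by
      have := Int.le_ceil (Real.logb 2 (2 * π / α))
      have h : ((c.toNat : ℤ) : ℝ) = (c.toNat : ℝ) := by norm_cast
      have : (c : ℝ) = (c.toNat : ℝ) := by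
        rw [← h]; norm_cast; omega
      linarith [Int.le_ceil (Real.logb 2 (2 * π / α))]
    calc 2 * π / α = (2:ℝ) ^ Real.logb 2 (2 * π / α) :=
          (Real.rpow_logb two_pos (by norm_num) hfracpos).symm
      _ ≤ (2:ℝ) ^ ((c.toNat : ℝ)) :=
          Real.rpow_le_rpow_left_iff one_lt_two |>.2 hcn
      _ = (2:ℝ) ^ c.toNat := by rw [Real.rpow_natCast]
  have h2i : 2 * (2 * π / α) ≤ (2:ℝ) ^ i := by
    calc 2 * (2 * π / α) ≤ 2 * (2:ℝ) ^ c.toNat := by linarith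
      _ = (2:ℝ) ^ (c.toNat + 1) := by ring
      _ ≤ (2:ℝ) ^ i := by
          apply pow_le_pow_right₀ one_le_two hile
  set w : ℝ := 2 * π / 2 ^ i with hwdef
  have h2ipos : (0:ℝ) < 2 ^ i := by positivity
  have hwpos : 0 < w := by positivity
  have hw2 : 2 * w ≤ α := by
    rw [hwdef, show 2 * (2 * π / 2 ^ i) = 2 * (2 * π) / 2 ^ i from by ring,
      div_le_iff₀ h2ipos]
    calc 2 * (2 * π) = 2 * (2 * π / α) * α := by field_simp
      _ ≤ 2 ^ i * α := mul_le_mul_of_nonneg_right h2i hα.le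
      _ = α * 2 ^ i := mul_comm _ _
  set K : ℤ := ⌈(a - α) / w⌉ with hK
  have hK1 : a - α ≤ K * w := by
    have h := Int.le_ceil ((a - α) / w)
    have h2 := mul_le_mul_of_nonneg_right h hwpos.le
    rw [div_mul_cancel₀ _ (ne_of_gt hwpos)] at h2
    exact h2
  have hK2 : (K + 1 : ℝ) * w ≤ a := by
    have hceil : (K : ℝ) < (a - α) / w + 1 := Int.ceil_lt_add_one _
    have hKw : (K : ℝ) * w < (a - α) + w := by
      have h := mul_lt_mul_of_pos_right hceil hwpos
      calc (K : ℝ) * w < ((a - α) / w + 1) * w := h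
        _ = (a - α) + w := by field_simp
    nlinarith
  set k : ℕ := (K % (2 ^ i : ℤ)).toNat with hk
  have h2iz : (0:ℤ) < 2 ^ i := by positivity
  have hcast : ((2 ^ i : ℕ) : ℤ) = (2 : ℤ) ^ i := by push_cast; ring
  have hklt : k < 2 ^ i := by
    have h1 := Int.emod_lt_of_pos K h2iz
    have h0 := Int.emod_nonneg K (ne_of_gt h2iz)
    omega
  set j : ℤ := K / (2 ^ i : ℤ) with hj
  have hKkj : (K : ℝ) = k + 2 ^ i * j := by
    have hint : K = (k : ℤ) + 2 ^ i * j := by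
      have hdv := Int.emod_add_mul_ediv K (2 ^ i)
      have hknn : (0:ℤ) ≤ K % (2 ^ i) := Int.emod_nonneg K (ne_of_gt h2iz)
      rw [hk, hj]
      push_cast [Int.toNat_of_nonneg hknn]
      omega
    exact_mod_cast hint
  refine ⟨slicePiece q x i k, ⟨k, hklt, rfl⟩, ?_⟩
  rintro y ⟨⟨r, hr, θ, hθ1, hθ2, rfl⟩, -⟩
  refine ⟨r, hr, a - (θ + j * (2 * π)), ?_, ?_, ?_⟩
  · -- 0 ≤ t : θ + 2πj ≤ a
    have h1 : θ ≤ 2 * π * (k + 1) / 2 ^ i := hθ2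
    have h2 : 2 * π * (k + 1) / 2 ^ i = (k + 1 : ℝ) * w := by
      rw [hwdef]; ring
    have h3 : θ + j * (2 * π) ≤ (k + 1 : ℝ) * w + j * (2 ^ i * w) := by
      have : j * (2 * π) = j * (2 ^ i * w) := by
        rw [hwdef]; field_simp
      rw [this]; linarith [h2 ▸ h1]
    have h4 : (k + 1 : ℝ) * w + j * (2 ^ i * w) = ((K : ℝ) + 1) * w := by
      rw [hKkj]; ring
    linarith [h4 ▸ h3]
  · -- t ≤ α : θ + 2πj ≥ a - α
    have h2 : 2 * π * k / 2 ^ i = (k : ℝ) * w := by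
      rw [hwdef]; ring
    have h3 : (k : ℝ) * w + j * (2 ^ i * w) ≤ θ + j * (2 * π) := by
      have : j * (2 * π) = j * (2 ^ i * w) := by
        rw [hwdef]; field_simp
      rw [this]; linarith [h2 ▸ hθ1]
    have h4 : (k : ℝ) * w + j * (2 ^ i * w) = (K : ℝ) * w := by
      rw [hKkj]; ring
    linarith [h4 ▸ h3]
  · -- equality of points
    have : a - (a - (θ + j * (2 * π))) = θ + j * (2 * π) := by ring
    rw [this]
    have hud : unitDir (θ + j * (2 * π)) = unitDir θ := by
      unfold unitDir
      rw [Real.cos_add_int_mul_two_pi, Real.sin_add_int_mul_two_pi]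
    rw [hud]
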